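/- Under the standing assumptions on G, with G a convex set-valued map, 𝒳 and 𝒱 convex, let B : 𝒳 → [0, ∞) be a concave upper semicontinuous function, suppose μ has finite mean v̄ = E[v] ∈ 𝒱, all the functions λ_k^B are μ^{⊗k}-integrable, and for all x ∈ 𝒳 one has sup_{x⁺ ∈ G(x, v̄)} B(x⁺) ≤ B(x). Then for every 0 ≤ j ≤ k, every x ∈ 𝒳, and every fixed w_0, …, w_{j−1} ∈ 𝒱, the conditional-expectation inequality ∫ λ_k^B(x, w_0, …, w_{j−1}, u_j, …, u_{k−1}) dμ^{⊗(k−j)}(u_j, …, u_{k−1}) ≤ λ_j^B(x, w_0, …, w_{j−1}) holds; equivalently, the sequence Z_k = λ_k^B(x, v_0, …, v_{k−1}) is a supermartingale with respect to the filtration generated by the i.i.d. inputs v_0, v_1, …. -/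

import Mathlib

open MeasureTheory Set Pointwise

/-- A set-valued map `G` is upper semicontinuous on `X`. -/
def USCOn {E F : Type*} [TopologicalSpace E] [NormedAddCommGroup F]
    (X : Set E) (G : E → Set F) : Prop :=
  ∀ x ∈ X, ∀ δ > 0, ∃ U ∈ nhds x, ∀ y ∈ U ∩ X, G y ⊆ G x + Metric.ball 0 δ

/-- A set-valued map `G` is locally bounded on `X`. -/
def LocallyBoundedOn {E F : Type*} [TopologicalSpace E] [Norm F]
    (X : Set E) (G : E → Set F) : Prop :=
  ∀ x ∈ X, ∃ U ∈ nhds x, ∃ β > 0, ∀ y ∈ U ∩ X, ∀ ζ ∈ G y, ‖ζ‖ ≤ β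

/-- Measurability of a set-valued map. -/
def MeasSetValued {T F : Type*} [MeasurableSpace T] [TopologicalSpace F]
    (S : T → Set F) : Prop :=
  ∀ O : Set F, IsOpen O → MeasurableSet {t | (S t ∩ O).Nonempty}

/-- Standing assumptions on the stochastic difference inclusion `x⁺ ∈ G x v`. -/
structure Standing {n m : ℕ} (X : Set (Fin n → ℝ)) (V : Set (Fin m → ℝ))
    (G : (Fin n → ℝ) → (Fin m → ℝ) → Set (Fin n → ℝ)) : Prop where
  usc : ∀ v ∈ V, USCOn X (fun x => G x v)
  locBdd : LocallyBoundedOn (X ×ˢ V) (fun p => G p.1 p.2)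
  nonemptyVals : ∀ x ∈ X, ∀ v ∈ V, (G x v).Nonempty
  closedVals : ∀ x ∈ X, ∀ v ∈ V, IsClosed (G x v)
  convexVals : ∀ x ∈ X, ∀ v ∈ V, Convex ℝ (G x v)
  graphMeas : MeasSetValued (fun v : Fin m → ℝ =>
    {p : (Fin n → ℝ) × (Fin n → ℝ) | p.1 ∈ X ∧ p.2 ∈ G p.1 v})

/-- The recursively defined functions `λ_k^B`:
`λ_0^B(x) = B(x)`, `λ_{k+1}^B(x, v₀,…,v_k) = sup_{x₁ ∈ G(x,v₀)} λ_k^B(x₁, v₁,…,v_k)`. -/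
noncomputable def lam {α β : Type*} (G : α → β → Set α) (B : α → ℝ) :
    (k : ℕ) → α → (Fin k → β) → ℝ
  | 0, x, _ => B x
  | (k+1), x, v => sSup ((fun y => lam G B k y (fun i => v i.succ)) '' G x (v 0))

/-! ### Auxiliary lemmas -/

section GenericMeasure
variable {α β : Type*} [MeasurableSpace α] [MeasurableSpace β]

/-- If `h ≤ H` on a "thick" set (every measurable set in the complement is null) and `H` is
measurable, then the lower Lebesgue integrals compare. -/
lemma lint_le_of_le_on (μ : Measure α) (Vs : Set α)
    (hthick : ∀ S, MeasurableSet S → S ⊆ Vsᶜ → μ S = 0)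
    (h H : α → ENNReal) (hH : Measurable H) (hle : ∀ v ∈ Vs, h v ≤ H v) :
    ∫⁻ v, h v ∂μ ≤ ∫⁻ v, H v ∂μ := by
  rw [← iSup_lintegral_measurable_le_eq_lintegral h]
  refine iSup_le fun g => iSup_le fun hg => iSup_le fun hgh => ?_
  refine lintegral_mono_ae ?_
  have hS : MeasurableSet {v | ¬ g v ≤ H v} := by
    have : {v | ¬ g v ≤ H v} = {v | H v < g v} := by ext v; exact not_le
    rw [this]; exact measurableSet_lt hH hg
  have hsub : {v | ¬ g v ≤ H v} ⊆ Vsᶜ := by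
    intro v hv hvV
    exact hv ((hgh v).trans (hle v hvV))
  rw [Filter.eventually_iff, mem_ae_iff]
  have : {v | g v ≤ H v}ᶜ = {v | ¬ g v ≤ H v} := by ext v; simp
  rw [this]; exact hthick _ hS hsub

/-- One direction of Tonelli's theorem which is valid for arbitrary (not necessarily
measurable) functions. -/
lemma lintegral_prod_le' (ν : Measure α) (ρ : Measure β) [SFinite ρ]
    (H : α × β → ENNReal) :
    ∫⁻ p, H p ∂(ν.prod ρ) ≤ ∫⁻ a, ∫⁻ b, H (a, b) ∂ρ ∂ν := by
  rw [← iSup_lintegral_measurable_le_eq_lintegral H]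
  refine iSup_le fun g => iSup_le fun hg => iSup_le fun hgh => ?_
  rw [lintegral_prod g hg.aemeasurable]
  exact lintegral_mono fun a => lintegral_mono fun b => hgh (a, b)

end GenericMeasure

/-- Combination inequality for suprema of nonempty sets of reals. -/
lemma comb_sSup_le {S1 S2 : Set ℝ} {a b M : ℝ} (ha : 0 ≤ a) (hb : 0 ≤ b)
    (h1 : S1.Nonempty) (h2 : S2.Nonempty)
    (hc : ∀ s ∈ S1, ∀ t ∈ S2, a * s + b * t ≤ M) :
    a * sSup S1 + b * sSup S2 ≤ M := by
  have claim2 : ∀ s ∈ S1, b * sSup S2 ≤ M - a * s := by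
    intro s hs
    rcases hb.eq_or_lt with rfl | hb'
    · obtain ⟨t, ht⟩ := h2
      have := hc s hs t ht
      simp only [zero_mul]
      linarith
    · have hS2 : sSup S2 ≤ (M - a * s) / b :=
        csSup_le h2 fun t ht => (le_div_iff₀ hb').mpr (by linarith [hc s hs t ht])
      calc b * sSup S2 ≤ b * ((M - a * s) / b) := mul_le_mul_of_nonneg_left hS2 hb
        _ = M - a * s := by field_simp
  rcases ha.eq_or_lt with rfl | ha'
  · obtain ⟨s, hs⟩ := h1
    have := claim2 s hs
    simp only [zero_mul, zero_add] at this ⊢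
    linarith
  · have hS1 : sSup S1 ≤ (M - b * sSup S2) / a :=
      csSup_le h1 fun s hs => (le_div_iff₀ ha').mpr (by linarith [claim2 s hs])
    have h3 : a * sSup S1 ≤ a * ((M - b * sSup S2) / a) := mul_le_mul_of_nonneg_left hS1 ha
    have heq : a * ((M - b * sSup S2) / a) = M - b * sSup S2 := by field_simp
    linarith

lemma lam_nonneg {α β : Type*} (G : α → β → Set α) (B : α → ℝ) (hB : ∀ y, 0 ≤ B y) :
    ∀ k x (v : Fin k → β), 0 ≤ lam G B k x v := by
  intro k
  induction k with
  | zero => intro x v; exact hB x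
  | succ k ih =>
    intro x v
    refine Real.sSup_nonneg ?_
    rintro r ⟨y, _, rfl⟩
    exact ih y _

lemma lam_succ {α β : Type*} (G : α → β → Set α) (B : α → ℝ) (k : ℕ) (x : α)
    (v : Fin (k+1) → β) :
    lam G B (k+1) x v = sSup ((fun y => lam G B k y (Fin.tail v)) '' G x (v 0)) := rfl

lemma lam_cast {α β : Type*} (G : α → β → Set α) (B : α → ℝ) {k1 k2 : ℕ} (h : k1 = k2)
    (x : α) (g : Fin k2 → β) :
    lam G B k1 x (g ∘ Fin.cast h) = lam G B k2 x g := by subst h; rfl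

lemma fin_tail_snoc {γ : Type*} {jj : ℕ} (w : Fin (jj+1) → γ) (z : γ) :
    Fin.tail (α := fun _ => γ) (Fin.snoc (α := fun _ => γ) w z)
      = Fin.snoc (α := fun _ => γ) (Fin.tail (α := fun _ => γ) w) z := by
  funext i
  refine Fin.lastCases ?_ (fun i => ?_) i
  · simp [Fin.tail, Fin.succ_last, Fin.snoc_last]
  · simp only [Fin.tail, Fin.succ_castSucc, Fin.snoc_castSucc]

/-- An upper semicontinuous function is bounded above on compact sets. -/
lemma usc_bddAbove {n : ℕ} {X : Set (Fin n → ℝ)} {B : (Fin n → ℝ) → ℝ}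
    (hBusc : UpperSemicontinuousOn B X) {K : Set (Fin n → ℝ)}
    (hK : IsCompact K) (hKX : K ⊆ X) : BddAbove (B '' K) := by
  have h : ∀ y (_ : y ∈ K), ∃ O : Set (Fin n → ℝ),
      IsOpen O ∧ y ∈ O ∧ ∀ z ∈ O ∩ X, B z < B y + 1 := by
    intro y hy
    have h1 : ∀ᶠ z in nhdsWithin y X, B z < B y + 1 :=
      hBusc y (hKX hy) (B y + 1) (by linarith)
    obtain ⟨O, hO, hyO, hsub⟩ := mem_nhdsWithin.mp h1
    exact ⟨O, hO, hyO, fun z hz => hsub hz⟩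
  choose O hOopen hyO hOlt using h
  obtain ⟨t, ht⟩ := hK.elim_nhds_subcover' O (fun y hy => (hOopen y hy).mem_nhds (hyO y hy))
  obtain ⟨M, hM⟩ := (t.finite_toSet.image fun y => B y.1 + 1).bddAbove
  refine ⟨M, ?_⟩
  rintro _ ⟨z, hz, rfl⟩
  have hz2 := ht hz
  simp only [mem_iUnion] at hz2
  obtain ⟨y, hyt, hzO⟩ := hz2
  refine le_trans (le_of_lt (hOlt y.1 y.2 z ⟨hzO, hKX hz⟩)) (hM ?_)
  exact mem_image_of_mem _ hyt

/-- The union of the values of an upper semicontinuous, locally bounded, closed-valued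
set-valued map over a compact set is contained in a compact subset of `X`. -/
lemma union_G_compact {n m : ℕ} {X : Set (Fin n → ℝ)} {V : Set (Fin m → ℝ)}
    {G : (Fin n → ℝ) → (Fin m → ℝ) → Set (Fin n → ℝ)}
    (husc : ∀ v ∈ V, USCOn X (fun x => G x v))
    (hloc : LocallyBoundedOn (X ×ˢ V) (fun p => G p.1 p.2))
    (hclosed : ∀ x ∈ X, ∀ v ∈ V, IsClosed (G x v))
    (hmap : ∀ x ∈ X, ∀ v ∈ V, G x v ⊆ X)
    {K : Set (Fin n → ℝ)} {v : Fin m → ℝ}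
    (hK : IsCompact K) (hKX : K ⊆ X) (hv : v ∈ V) :
    ∃ T, IsCompact T ∧ T ⊆ X ∧ ∀ y ∈ K, G y v ⊆ T := by
  classical
  refine ⟨⋃ y ∈ K, G y v, ?_, ?_, fun y hy => subset_iUnion₂ (s := fun y _ => G y v) y hy⟩
  swap
  · intro z hz
    simp only [mem_iUnion] at hz
    obtain ⟨y, hy, hzy⟩ := hz
    exact hmap y (hKX hy) v hv hzy
  have hbdd : Bornology.IsBounded (⋃ y ∈ K, G y v) := by
    have h : ∀ y (_ : y ∈ K), ∃ O : Set (Fin n → ℝ),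
        O ∈ nhds y ∧ ∃ β : ℝ, ∀ z ∈ O ∩ X, ∀ ζ ∈ G z v, ‖ζ‖ ≤ β := by
      intro y hy
      obtain ⟨U, hU, β, hβ, hb⟩ := hloc (y, v) ⟨hKX hy, hv⟩
      rw [mem_nhds_prod_iff] at hU
      obtain ⟨O, hO, Q, hQ, hsub⟩ := hU
      refine ⟨O, hO, β, fun z hz ζ hζ => ?_⟩
      exact hb (z, v) ⟨hsub ⟨hz.1, mem_of_mem_nhds hQ⟩, hz.2, hv⟩ ζ hζ
    choose O hOnhds β hβ using h
    obtain ⟨t, htsub⟩ := hK.elim_nhds_subcover' O hOnhds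
    have hfin : ((fun (y : {z // z ∈ K}) => if h : y.1 ∈ K then β y.1 h else 0) '' ↑t).Finite :=
      t.finite_toSet.image _
    obtain ⟨M, hM⟩ := hfin.bddAbove
    have hsubM : (⋃ y ∈ K, G y v) ⊆ Metric.closedBall 0 M := by
      intro ζ hζ
      simp only [mem_iUnion] at hζ
      obtain ⟨y, hy, hζy⟩ := hζ
      have hy2 := htsub hy
      simp only [mem_iUnion] at hy2
      obtain ⟨p, hpt, hyO⟩ := hy2
      have h1 := hβ p.1 p.2 y ⟨hyO, hKX hy⟩ ζ hζy
      have h2 : β p.1 p.2 ≤ M := by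
        simpa only [dif_pos p.2] using hM (mem_image_of_mem (fun (y : {z // z ∈ K}) =>
          if h : y.1 ∈ K then β y.1 h else 0) hpt)
      rw [mem_closedBall_zero_iff]
      linarith
    exact Metric.isBounded_closedBall.subset hsubM
  have hcl : IsClosed (⋃ y ∈ K, G y v) := by
    refine IsSeqClosed.isClosed ?_
    intro ζs ζ hmem htend
    have hys : ∀ nn : ℕ, ∃ y, y ∈ K ∧ ζs nn ∈ G y v := by
      intro nn
      have := hmem nn
      simp only [mem_iUnion] at this
      obtain ⟨y, hy, h2⟩ := this
      exact ⟨y, hy, h2⟩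
    choose ys hysK hysG using hys
    obtain ⟨y, hyK, φ, hφ, hyt⟩ := hK.tendsto_subseq hysK
    have hGyc : IsClosed (G y v) := hclosed y (hKX hyK) v hv
    have hmemG : ζ ∈ G y v := by
      rw [← hGyc.closure_eq]
      rw [Metric.mem_closure_iff]
      intro ε hε
      obtain ⟨U, hU, huscU⟩ := husc v hv y (hKX hyK) (ε/2) (by linarith)
      have h1 : ∀ᶠ k in Filter.atTop, ys (φ k) ∈ U := hyt hU
      obtain ⟨N1, hN1⟩ := Filter.eventually_atTop.mp h1
      obtain ⟨N2, hN2⟩ := Metric.tendsto_atTop.mp (htend.comp hφ.tendsto_atTop) (ε/2)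
        (by linarith)
      set k := max N1 N2
      have hk1 : ys (φ k) ∈ U := hN1 k (le_max_left _ _)
      have hk2 : dist (ζs (φ k)) ζ < ε/2 := hN2 k (le_max_right _ _)
      have hmem2 : ζs (φ k) ∈ G y v + Metric.ball 0 (ε/2) :=
        huscU (ys (φ k)) ⟨hk1, hKX (hysK (φ k))⟩ (hysG (φ k))
      rw [mem_add] at hmem2
      obtain ⟨g, hg, e, he, heq⟩ := hmem2
      refine ⟨g, hg, ?_⟩
      have hde : dist (ζs (φ k)) g = ‖e‖ := by
        rw [← heq, dist_eq_norm]
        simp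
      have hne : ‖e‖ < ε/2 := by rwa [mem_ball_zero_iff] at he
      calc dist ζ g ≤ dist ζ (ζs (φ k)) + dist (ζs (φ k)) g := dist_triangle _ _ _
        _ < ε/2 + ε/2 := by rw [dist_comm ζ (ζs (φ k))]; rw [hde]; exact add_lt_add hk2 hne
        _ = ε := by ring
    exact mem_biUnion hyK hmemG
  exact Metric.isCompact_of_isClosed_isBounded hcl hbdd

section LamLemmas
variable {n m : ℕ} {X : Set (Fin n → ℝ)} {V : Set (Fin m → ℝ)}
    {G : (Fin n → ℝ) → (Fin m → ℝ) → Set (Fin n → ℝ)} {B : (Fin n → ℝ) → ℝ}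

lemma lam_bddAbove
    (husc : ∀ v ∈ V, USCOn X (fun x => G x v))
    (hloc : LocallyBoundedOn (X ×ˢ V) (fun p => G p.1 p.2))
    (hclosed : ∀ x ∈ X, ∀ v ∈ V, IsClosed (G x v))
    (hne : ∀ x ∈ X, ∀ v ∈ V, (G x v).Nonempty)
    (hmap : ∀ x ∈ X, ∀ v ∈ V, G x v ⊆ X)
    (hBusc : UpperSemicontinuousOn B X) :
    ∀ (k : ℕ) (w : Fin k → (Fin m → ℝ)), (∀ i, w i ∈ V) →
    ∀ K : Set (Fin n → ℝ), IsCompact K → K ⊆ X →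
    BddAbove ((fun y => lam G B k y w) '' K) := by
  intro k
  induction k with
  | zero => intro w _ K hK hKX; exact usc_bddAbove hBusc hK hKX
  | succ k ih =>
    intro w hw K hK hKX
    obtain ⟨T, hTc, hTX, hTsub⟩ := union_G_compact husc hloc hclosed hmap hK hKX (hw 0)
    obtain ⟨M, hM⟩ := ih (Fin.tail w) (fun i => hw i.succ) T hTc hTX
    refine ⟨M, ?_⟩
    rintro _ ⟨y, hy, rfl⟩
    show lam G B (k+1) y w ≤ M
    rw [lam_succ]
    refine csSup_le ((hne y (hKX hy) (w 0) (hw 0)).image _) ?_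
    rintro _ ⟨z, hz, rfl⟩
    exact hM ⟨z, hTsub y hy hz, rfl⟩

lemma lam_concave (hXconv : Convex ℝ X) (hVconv : Convex ℝ V)
    (hgraph : Convex ℝ {p : ((Fin n → ℝ) × (Fin m → ℝ)) × (Fin n → ℝ) |
      p.1.1 ∈ X ∧ p.1.2 ∈ V ∧ p.2 ∈ G p.1.1 p.1.2})
    (hne : ∀ x ∈ X, ∀ v ∈ V, (G x v).Nonempty)
    (hmap : ∀ x ∈ X, ∀ v ∈ V, G x v ⊆ X)
    (hBconc : ConcaveOn ℝ X B)
    (hbddAll : ∀ (k : ℕ) (w : Fin k → (Fin m → ℝ)), (∀ i, w i ∈ V) →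
      ∀ K : Set (Fin n → ℝ), IsCompact K → K ⊆ X →
      BddAbove ((fun y => lam G B k y w) '' K))
    (hTex : ∀ x ∈ X, ∀ v ∈ V, ∃ T, IsCompact T ∧ T ⊆ X ∧ G x v ⊆ T) :
    ∀ (k : ℕ) (a b : ℝ), 0 ≤ a → 0 ≤ b → a + b = 1 →
    ∀ x1, x1 ∈ X → ∀ x2, x2 ∈ X → ∀ w1 w2 : Fin k → (Fin m → ℝ),
    (∀ i, w1 i ∈ V) → (∀ i, w2 i ∈ V) →
    a * lam G B k x1 w1 + b * lam G B k x2 w2 ≤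
      lam G B k (a • x1 + b • x2) (fun i => a • w1 i + b • w2 i) := by
  intro k
  induction k with
  | zero =>
    intro a b ha hb hab x1 hx1 x2 hx2 w1 w2 _ _
    have := hBconc.2 hx1 hx2 ha hb hab
    simpa [smul_eq_mul, lam] using this
  | succ k ih =>
    intro a b ha hb hab x1 hx1 x2 hx2 w1 w2 hw1 hw2
    have hx : a • x1 + b • x2 ∈ X := hXconv hx1 hx2 ha hb hab
    have hv0 : a • w1 0 + b • w2 0 ∈ V := hVconv (hw1 0) (hw2 0) ha hb hab
    rw [lam_succ, lam_succ, lam_succ]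
    have hbdd : BddAbove ((fun y => lam G B k y
        (Fin.tail (fun i => a • w1 i + b • w2 i))) '' G (a • x1 + b • x2)
        ((fun i => a • w1 i + b • w2 i) 0)) := by
      obtain ⟨T, hTc, hTX, hsub⟩ := hTex _ hx _ hv0
      exact (hbddAll k _ (fun i => hVconv (hw1 i.succ) (hw2 i.succ) ha hb hab)
        T hTc hTX).mono (image_mono hsub)
    refine comb_sSup_le ha hb
      ((hne x1 hx1 (w1 0) (hw1 0)).image _) ((hne x2 hx2 (w2 0) (hw2 0)).image _) ?_
    rintro _ ⟨y1, hy1, rfl⟩ _ ⟨y2, hy2, rfl⟩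
    have hy1X : y1 ∈ X := hmap x1 hx1 (w1 0) (hw1 0) hy1
    have hy2X : y2 ∈ X := hmap x2 hx2 (w2 0) (hw2 0) hy2
    have hIH := ih a b ha hb hab y1 hy1X y2 hy2X (Fin.tail w1) (Fin.tail w2)
      (fun i => hw1 i.succ) (fun i => hw2 i.succ)
    have hmem : a • y1 + b • y2 ∈ G (a • x1 + b • x2) (a • w1 0 + b • w2 0) := by
      have := hgraph (x := ((x1, w1 0), y1)) (y := ((x2, w2 0), y2))
        ⟨hx1, hw1 0, hy1⟩ ⟨hx2, hw2 0, hy2⟩ ha hb hab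
      exact this.2.2
    calc a * lam G B k y1 (Fin.tail w1) + b * lam G B k y2 (Fin.tail w2)
        ≤ lam G B k (a • y1 + b • y2) (fun i => a • Fin.tail w1 i + b • Fin.tail w2 i) := hIH
      _ ≤ sSup _ := le_csSup hbdd ⟨a • y1 + b • y2, hmem, rfl⟩

lemma lam_snoc_vbar_le
    (hne : ∀ x ∈ X, ∀ v ∈ V, (G x v).Nonempty)
    (hmap : ∀ x ∈ X, ∀ v ∈ V, G x v ⊆ X)
    {vbar : Fin m → ℝ} (hvbarV : vbar ∈ V)
    (hsup : ∀ x ∈ X, sSup (B '' G x vbar) ≤ B x)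
    (hbddAll : ∀ (k : ℕ) (w : Fin k → (Fin m → ℝ)), (∀ i, w i ∈ V) →
      ∀ K : Set (Fin n → ℝ), IsCompact K → K ⊆ X →
      BddAbove ((fun y => lam G B k y w) '' K))
    (hTex : ∀ x ∈ X, ∀ v ∈ V, ∃ T, IsCompact T ∧ T ⊆ X ∧ G x v ⊆ T) :
    ∀ (j : ℕ), ∀ x ∈ X, ∀ w : Fin j → (Fin m → ℝ), (∀ i, w i ∈ V) →
    lam G B (j+1) x (Fin.snoc w vbar) ≤ lam G B j x w := by
  intro j
  induction j with
  | zero =>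
    intro x hx w _
    rw [lam_succ]
    have h0 : (Fin.snoc w vbar : Fin 1 → (Fin m → ℝ)) 0 = vbar := by
      have : (0 : Fin 1) = Fin.last 0 := rfl
      rw [this, Fin.snoc_last]
    rw [h0]
    exact hsup x hx
  | succ j ih =>
    intro x hx w hw
    have h0 : (Fin.snoc w vbar : Fin (j+2) → (Fin m → ℝ)) 0 = w 0 := by
      have : (0 : Fin (j+2)) = Fin.castSucc 0 := rfl
      rw [this, Fin.snoc_castSucc]
    rw [lam_succ, lam_succ, h0]
    refine csSup_le ((hne x hx (w 0) (hw 0)).image _) ?_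
    rintro _ ⟨y, hy, rfl⟩
    have hyX : y ∈ X := hmap x hx (w 0) (hw 0) hy
    have hbdd : BddAbove ((fun z => lam G B j z (Fin.tail w)) '' G x (w 0)) := by
      obtain ⟨T, hTc, hTX, hsub⟩ := hTex x hx (w 0) (hw 0)
      exact (hbddAll j (Fin.tail w) (fun i => hw i.succ) T hTc hTX).mono (image_mono hsub)
    simp only [fin_tail_snoc]
    exact le_trans (ih y hyX (Fin.tail w) fun i => hw i.succ) (le_csSup hbdd ⟨y, hy, rfl⟩)

end LamLemmas

/-- The key separation dichotomy for a concave function `f ≥ 0` on a convex set `V` at a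
point `vbar ∈ V`: either there is an approximate affine majorant exact at `vbar` up to `ε`,
or there is a linear functional supporting `V` at `vbar` that is non-constant on `V`. -/
lemma dich {m : ℕ} (V : Set (Fin m → ℝ)) (hVconv : Convex ℝ V)
    (vbar : Fin m → ℝ) (hvbar : vbar ∈ V)
    (f : (Fin m → ℝ) → ℝ) (hconc : ConcaveOn ℝ V f) (hnn : ∀ v ∈ V, 0 ≤ f v)
    (ε : ℝ) (hε : 0 < ε) :
    (∃ (c₀ : ℝ) (l : (Fin m → ℝ) →L[ℝ] ℝ),
        (∀ v ∈ V, f v ≤ c₀ + l v) ∧ c₀ + l vbar ≤ f vbar + ε) ∨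
    (∃ a : (Fin m → ℝ) →L[ℝ] ℝ, (∀ v ∈ V, a v ≤ a vbar) ∧ ∃ v0 ∈ V, a v0 < a vbar) := by
  classical
  obtain ⟨W, hW⟩ := Submodule.exists_isCompl (vectorSpan ℝ V)
  set E2 := (Fin m → ℝ) × ℝ
  set D : Set E2 := {p | ∃ v ∈ V, ∃ u ∈ W, p.1 = v + u ∧ p.2 ≤ f v} with hD
  have hmemD : ∀ v ∈ V, ∀ u ∈ W, ∀ t : ℝ, t ≤ f v → ((v + u, t) : E2) ∈ D :=
    fun v hv u hu t ht => ⟨v, hv, u, hu, rfl, ht⟩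
  have hmemD' : ∀ v ∈ V, ∀ t : ℝ, t ≤ f v → ((v, t) : E2) ∈ D := by
    intro v hv t ht
    have := hmemD v hv 0 W.zero_mem t ht
    simpa using this
  have hDconv : Convex ℝ D := by
    rintro p ⟨v1, hv1, u1, hu1, hp1, hp2⟩ q ⟨v2, hv2, u2, hu2, hq1, hq2⟩ a b ha hb hab
    refine ⟨a • v1 + b • v2, hVconv hv1 hv2 ha hb hab, a • u1 + b • u2,
      W.add_mem (W.smul_mem _ hu1) (W.smul_mem _ hu2), ?_, ?_⟩
    · show a • p.1 + b • q.1 = _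
      rw [hp1, hq1, smul_add, smul_add]
      abel
    · show a • p.2 + b • q.2 ≤ _
      have hf := hconc.2 hv1 hv2 ha hb hab
      have h1 : a • p.2 ≤ a • f v1 := smul_le_smul_of_nonneg_left hp2 ha
      have h2 : b • q.2 ≤ b • f v2 := smul_le_smul_of_nonneg_left hq2 hb
      calc a • p.2 + b • q.2 ≤ a • f v1 + b • f v2 := add_le_add h1 h2
        _ ≤ f (a • v1 + b • v2) := hf
  have hq0 : ((vbar, 0) : E2) ∈ D := hmemD' vbar hvbar 0 (hnn vbar hvbar)
  have hspan : affineSpan ℝ D = ⊤ := by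
    set A := affineSpan ℝ D with hA
    have hq0A : ((vbar, 0) : E2) ∈ A := subset_affineSpan ℝ D hq0
    have hmemdir : ∀ p q : E2, p ∈ D → q ∈ D → p - q ∈ A.direction := fun p q hp hq =>
      AffineSubspace.vsub_mem_direction (subset_affineSpan ℝ D hp) (subset_affineSpan ℝ D hq)
    have hdir1 : ∀ u ∈ W, ((u, 0) : E2) ∈ A.direction := by
      intro u hu
      have h1 := hmemdir (vbar + u, 0) (vbar, 0)
        (hmemD vbar hvbar u hu 0 (hnn vbar hvbar)) hq0
      have heq : ((vbar + u, 0) : E2) - (vbar, 0) = (u, 0) := by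
        refine Prod.ext ?_ ?_ <;> simp
      rwa [heq] at h1
    have hdir2 : ((0, 1) : E2) ∈ A.direction := by
      have h1 := hmemdir (vbar, 0) (vbar, -1) hq0
        (hmemD' vbar hvbar (-1) (by linarith [hnn vbar hvbar]))
      have heq : ((vbar, 0) : E2) - (vbar, -1) = (0, 1) := by
        refine Prod.ext ?_ ?_ <;> simp
      rwa [heq] at h1
    have hdir3 : ∀ d ∈ vectorSpan ℝ V, ((d, 0) : E2) ∈ A.direction := by
      intro d hd
      have hle : vectorSpan ℝ V ≤ (A.direction).comap (LinearMap.inl ℝ (Fin m → ℝ) ℝ) := by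
        rw [vectorSpan_def, Submodule.span_le]
        rintro _ ⟨p, hp, q, hq, rfl⟩
        show ((p - q, 0) : E2) ∈ A.direction
        have h1 := hmemdir (p, 0) (q, 0) (hmemD' p hp 0 (hnn p hp)) (hmemD' q hq 0 (hnn q hq))
        have heq : ((p, 0) : E2) - (q, 0) = (p - q, 0) := by
          refine Prod.ext ?_ ?_ <;> simp
        rwa [heq] at h1
      exact hle hd
    rw [eq_top_iff]
    intro p _
    obtain ⟨d, hd, u, hu, hdu⟩ := Submodule.mem_sup.1
      (by rw [hW.sup_eq_top]; exact Submodule.mem_top :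
        p.1 - vbar ∈ vectorSpan ℝ V ⊔ W)
    have hpe : p = ((d, 0) + (u, 0) + p.2 • ((0, 1) : E2)) +ᵥ ((vbar, 0) : E2) := by
      have hp1 : p.1 = d + u + vbar := by rw [hdu]; abel
      refine Prod.ext ?_ ?_
      · show p.1 = d + u + p.2 • (0 : Fin m → ℝ) + vbar
        rw [hp1]; simp
      · show p.2 = 0 + 0 + p.2 * 1 + 0
        ring
    rw [hpe]
    exact AffineSubspace.vadd_mem_of_mem_direction
      (Submodule.add_mem _ (Submodule.add_mem _ (hdir3 d hd) (hdir1 u hu))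
        (Submodule.smul_mem _ _ hdir2)) hq0A
  have hint : (interior D).Nonempty :=
    (hDconv.interior_nonempty_iff_affineSpan_eq_top).mpr hspan
  set pp : E2 := (vbar, f vbar + ε) with hpp
  have hpD : pp ∉ D := by
    rintro ⟨v, hv, u, hu, h1, h2⟩
    have hu2 : vbar - v ∈ W := by
      have : vbar - v = u := by rw [show vbar = pp.1 from rfl, h1]; abel
      rw [this]; exact hu
    have hu1 : vbar - v ∈ vectorSpan ℝ V := by
      have := vsub_mem_vectorSpan ℝ hvbar hv
      simpa using this
    have hbot : vbar - v ∈ vectorSpan ℝ V ⊓ W := ⟨hu1, hu2⟩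
    rw [hW.inf_eq_bot] at hbot
    have hveq : v = vbar := (sub_eq_zero.mp hbot).symm
    rw [hveq] at h2
    have : f vbar + ε ≤ f vbar := h2
    linarith
  obtain ⟨ψ, hψ⟩ := geometric_hahn_banach_open_point (hDconv.interior) isOpen_interior
    (fun hc => hpD (interior_subset hc))
  have hψD : ∀ z ∈ D, ψ z ≤ ψ pp := by
    intro z hz
    obtain ⟨z0, hz0⟩ := hint
    have hev : ∀ᶠ t in nhdsWithin (0 : ℝ) (Ioi 0), ψ ((1 - t) • z + t • z0) < ψ pp := by
      filter_upwards [Ioo_mem_nhdsGT_of_mem (show (0:ℝ) ∈ Ico 0 1 from ⟨le_refl 0, one_pos⟩)]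
      intro t ht
      refine hψ _ (hDconv.combo_closure_interior_mem_interior (subset_closure hz) hz0
        (by linarith [ht.2]) ht.1 (by ring))
    have hcont : Continuous fun t : ℝ => ψ ((1 - t) • z + t • z0) :=
      ψ.continuous.comp (((continuous_const.sub continuous_id).smul continuous_const).add
        (continuous_id.smul continuous_const))
    have htend : Filter.Tendsto (fun t : ℝ => ψ ((1 - t) • z + t • z0))
        (nhdsWithin (0 : ℝ) (Ioi 0)) (nhds (ψ z)) := by
      have h0 : ψ ((1 - (0:ℝ)) • z + (0:ℝ) • z0) = ψ z := by simp
      have := (hcont.tendsto 0).mono_left (nhdsWithin_le_nhds (s := Ioi (0:ℝ)))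
      rwa [h0] at this
    exact le_of_tendsto htend (hev.mono fun t ht => ht.le)
  set aL : (Fin m → ℝ) →L[ℝ] ℝ := ψ.comp (ContinuousLinearMap.inl ℝ (Fin m → ℝ) ℝ) with haL
  set bb : ℝ := ψ (0, 1) with hbbdef
  have hdecomp : ∀ (v : Fin m → ℝ) (t : ℝ), ψ (v, t) = aL v + t * bb := by
    intro v t
    have hvt : ((v, t) : E2) = ((v, 0) : E2) + t • ((0, 1) : E2) := by
      refine Prod.ext ?_ ?_ <;> simp
    rw [hvt, map_add, ψ.map_smul, smul_eq_mul]
    rfl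
  have hψpp : ψ pp = aL vbar + (f vbar + ε) * bb := hdecomp vbar (f vbar + ε)
  have hbb : 0 ≤ bb := by
    by_contra hbbneg
    push_neg at hbbneg
    have hψ0 : aL vbar ≤ ψ pp := by
      have := hψD _ hq0
      rwa [hdecomp vbar 0, zero_mul, add_zero] at this
    set t := (ψ pp - aL vbar + 1) / bb with ht
    have htneg : t < 0 := div_neg_of_pos_of_neg (by linarith) hbbneg
    have hmem : ((vbar, t) : E2) ∈ D := hmemD' vbar hvbar t (by linarith [hnn vbar hvbar])
    have hle := hψD _ hmem
    rw [hdecomp vbar t] at hle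
    have htb : t * bb = ψ pp - aL vbar + 1 := by
      rw [ht, div_mul_cancel₀]
      exact ne_of_lt hbbneg
    linarith
  have hWa : ∀ u ∈ W, aL u = 0 := by
    intro u hu
    have hmem : ∀ s : ℝ, ((vbar + s • u, 0) : E2) ∈ D :=
      fun s => hmemD vbar hvbar (s • u) (W.smul_mem s hu) 0 (hnn vbar hvbar)
    have hb : ∀ s : ℝ, aL vbar + s * aL u ≤ ψ pp := by
      intro s
      have := hψD _ (hmem s)
      rw [hdecomp (vbar + s • u) 0, zero_mul, add_zero, map_add, aL.map_smul] at this
      simpa [smul_eq_mul] using this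
    by_contra hne
    have hb1 := hb ((ψ pp - aL vbar + 1) / aL u)
    rw [div_mul_cancel₀ _ hne] at hb1
    linarith
  rcases eq_or_lt_of_le hbb with hbeq | hbpos
  · refine Or.inr ⟨aL, ?_, ?_⟩
    · intro v hv
      have := hψD (v, f v) (hmemD' v hv (f v) (le_refl _))
      rw [hdecomp v (f v), hψpp, ← hbeq, mul_zero, mul_zero, add_zero, add_zero] at this
      exact this
    · obtain ⟨z0, hz0⟩ := hint
      have hz0D := interior_subset hz0
      obtain ⟨v0, hv0, u0, hu0, hz1, hz2⟩ := hz0D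
      have hlt := hψ z0 hz0
      refine ⟨v0, hv0, ?_⟩
      have hz0eq : ψ z0 = aL v0 := by
        have h1 : z0 = ((v0 + u0, z0.2) : E2) := Prod.ext hz1 rfl
        rw [h1, hdecomp (v0 + u0) z0.2, map_add, hWa u0 hu0, ← hbeq, mul_zero]
        ring
      rw [hz0eq, hψpp, ← hbeq, mul_zero, add_zero] at hlt
      exact hlt
  · refine Or.inl ⟨ψ pp / bb, -(bb⁻¹) • aL, ?_, ?_⟩
    · intro v hv
      have := hψD (v, f v) (hmemD' v hv (f v) (le_refl _))
      rw [hdecomp v (f v)] at this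
      have hval : (-(bb⁻¹) • aL) v = -(bb⁻¹) * aL v := rfl
      have hb' : bb ≠ 0 := ne_of_gt hbpos
      rw [hval]
      have h2 : f v ≤ (ψ pp - aL v) / bb := by
        rw [le_div_iff₀ hbpos]; linarith
      calc f v ≤ (ψ pp - aL v) / bb := h2
        _ = ψ pp / bb + -(bb⁻¹) * aL v := by field_simp; ring
    · have hval : (-(bb⁻¹) • aL) vbar = -(bb⁻¹) * aL vbar := rfl
      rw [hval, hψpp]
      have hb' : bb ≠ 0 := ne_of_gt hbpos
      have heq : (aL vbar + (f vbar + ε) * bb) / bb + -(bb⁻¹) * aL vbar = f vbar + ε := by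
        field_simp
        ring
      rw [heq]

/-- Jensen's inequality for a concave (not necessarily continuous or measurable) nonnegative
function on a convex "thick" set, in lower-integral form, proved by induction on the dimension
of the affine span. -/
lemma jensen_lintegral {m : ℕ} (μ : Measure (Fin m → ℝ)) [IsProbabilityMeasure μ]
    (hIntId : Integrable (fun v : Fin m → ℝ => v) μ)
    (vbar : Fin m → ℝ) (hmean : ∫ v, v ∂μ = vbar) :
    ∀ (N : ℕ) (V : Set (Fin m → ℝ)), Module.finrank ℝ (vectorSpan ℝ V) ≤ N →
    Convex ℝ V → (∀ S, MeasurableSet S → S ⊆ Vᶜ → μ S = 0) → vbar ∈ V →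
    ∀ f : (Fin m → ℝ) → ℝ, ConcaveOn ℝ V f → (∀ v ∈ V, 0 ≤ f v) →
    ∀ h : (Fin m → ℝ) → ENNReal, (∀ v ∈ V, h v ≤ ENNReal.ofReal (f v)) →
    ∫⁻ v, h v ∂μ ≤ ENNReal.ofReal (f vbar) := by
  intro N
  induction N using Nat.strong_induction_on with
  | _ N ih =>
  intro V hrank hVconv hthick hvbarV f hconc hnn h hh
  by_cases hB : ∃ a : (Fin m → ℝ) →L[ℝ] ℝ,
      (∀ v ∈ V, a v ≤ a vbar) ∧ ∃ v0 ∈ V, a v0 < a vbar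
  · -- dimension reduction
    obtain ⟨a, haV, v0, hv0, hstrict⟩ := hB
    have hintg : Integrable (fun v => a vbar - a v) μ :=
      (integrable_const _).sub (a.integrable_comp hIntId)
    have hmeas_lt : MeasurableSet {v : Fin m → ℝ | a vbar - a v < 0} :=
      measurableSet_lt ((continuous_const.sub a.continuous).measurable) measurable_const
    have hnn' : 0 ≤ᵐ[μ] fun v => a vbar - a v := by
      rw [Filter.EventuallyLE, Filter.eventually_iff, mem_ae_iff]
      have hset : {v : Fin m → ℝ | (0 : (Fin m → ℝ) → ℝ) v ≤ a vbar - a v}ᶜ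
          = {v | a vbar - a v < 0} := by
        ext v; simp [not_le]
      rw [hset]
      refine hthick _ hmeas_lt ?_
      intro v hv hvV
      have := haV v hvV
      simp only [mem_setOf_eq] at hv
      linarith
    have hzero : ∫ v, (a vbar - a v) ∂μ = 0 := by
      rw [integral_sub (integrable_const _) (a.integrable_comp hIntId), integral_const,
        a.integral_comp_comm hIntId, hmean]
      simp [measure_univ]
    have hae : (fun v => a vbar - a v) =ᵐ[μ] 0 :=
      (integral_eq_zero_iff_of_nonneg_ae hnn' hintg).mp hzero
    have hμne : μ {v : Fin m → ℝ | ¬ a v = a vbar} = 0 := by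
      rw [Filter.EventuallyEq, Filter.eventually_iff, mem_ae_iff] at hae
      have hset : {v : Fin m → ℝ | (fun v => a vbar - a v) v = (0 : (Fin m → ℝ) → ℝ) v}ᶜ
          = {v | ¬ a v = a vbar} := by
        ext v
        simp only [mem_compl_iff, mem_setOf_eq, Pi.zero_apply]
        constructor
        · intro hne heq; exact hne (by rw [heq]; ring)
        · intro hne heq; exact hne (by linarith [sub_eq_zero.mp heq])
      rwa [hset] at hae
    set V' := V ∩ {v | a v = a vbar} with hV'
    have hmeas_eq : MeasurableSet {v : Fin m → ℝ | a v = a vbar} :=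
      measurableSet_eq_fun a.continuous.measurable measurable_const
    have hthick' : ∀ S, MeasurableSet S → S ⊆ V'ᶜ → μ S = 0 := by
      intro S hS hsub
      have hdecomp : S ⊆ {v : Fin m → ℝ | ¬ a v = a vbar} ∪ (S ∩ {v | a v = a vbar}) := by
        intro s hs
        by_cases he : a s = a vbar
        · exact Or.inr ⟨hs, he⟩
        · exact Or.inl he
      have h2 : S ∩ {v | a v = a vbar} ⊆ Vᶜ := by
        rintro s ⟨hs1, hs2⟩ hsV
        exact (hsub hs1) ⟨hsV, hs2⟩
      have hb1 : μ (S ∩ {v | a v = a vbar}) = 0 := hthick _ (hS.inter hmeas_eq) h2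
      refine le_antisymm ?_ zero_le
      calc μ S ≤ μ ({v : Fin m → ℝ | ¬ a v = a vbar} ∪ (S ∩ {v | a v = a vbar})) :=
            measure_mono hdecomp
        _ ≤ μ {v : Fin m → ℝ | ¬ a v = a vbar} + μ (S ∩ {v | a v = a vbar}) :=
            measure_union_le _ _
        _ = 0 := by rw [hμne, hb1, add_zero]
    have hconvV' : Convex ℝ V' := by
      refine hVconv.inter ?_
      intro p hp q hq c d hc hd hcd
      simp only [mem_setOf_eq] at hp hq ⊢
      rw [map_add, a.map_smul, a.map_smul, hp, hq, smul_eq_mul, smul_eq_mul,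
        ← add_mul, hcd, one_mul]
    have hlt : vectorSpan ℝ V' < vectorSpan ℝ V := by
      refine lt_of_le_of_ne (vectorSpan_mono ℝ inter_subset_left) ?_
      intro heq
      have h1 : vbar - v0 ∈ vectorSpan ℝ V := by
        have := vsub_mem_vectorSpan ℝ hvbarV hv0
        simpa using this
      have h2 : vectorSpan ℝ V' ≤ LinearMap.ker (a : (Fin m → ℝ) →ₗ[ℝ] ℝ) := by
        rw [vectorSpan_def, Submodule.span_le]
        rintro _ ⟨p, hp, q, hq, rfl⟩
        simp only [SetLike.mem_coe, LinearMap.mem_ker, ContinuousLinearMap.coe_coe]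
        show a (p - q) = 0
        rw [map_sub a p q, hp.2, hq.2, sub_self]
      rw [← heq] at h1
      have h3 := h2 h1
      simp only [LinearMap.mem_ker, ContinuousLinearMap.coe_coe] at h3
      rw [map_sub a vbar v0] at h3
      linarith
    have hfr : Module.finrank ℝ (vectorSpan ℝ V') < Module.finrank ℝ (vectorSpan ℝ V) :=
      Submodule.finrank_lt_finrank_of_lt hlt
    exact ih (Module.finrank ℝ (vectorSpan ℝ V'))
      (by omega) V' le_rfl hconvV' hthick' ⟨hvbarV, rfl⟩ f
      (hconc.subset inter_subset_left hconvV') (fun v hv => hnn v hv.1) h (fun v hv => hh v hv.1)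
  · -- affine majorants for every ε > 0
    refine ENNReal.le_of_forall_pos_le_add ?_
    intro ε hε _
    have hdich := dich V hVconv vbar hvbarV f hconc hnn ε (by exact_mod_cast hε)
    rcases hdich with ⟨c₀, l, hl, hlv⟩ | hr
    · have hle : ∀ v ∈ V, h v ≤ ENNReal.ofReal (c₀ + l v) := fun v hv =>
        (hh v hv).trans (ENNReal.ofReal_le_ofReal (hl v hv))
      have hH : Measurable fun v : Fin m → ℝ => ENNReal.ofReal (c₀ + l v) :=
        ((continuous_const.add l.continuous).measurable).ennreal_ofReal
      have h1 : ∫⁻ v, h v ∂μ ≤ ∫⁻ v, ENNReal.ofReal (c₀ + l v) ∂μ :=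
        lint_le_of_le_on μ V hthick h _ hH hle
      have hInt : Integrable (fun v => c₀ + l v) μ :=
        (integrable_const _).add (l.integrable_comp hIntId)
      have hnn2 : 0 ≤ᵐ[μ] fun v => c₀ + l v := by
        rw [Filter.EventuallyLE, Filter.eventually_iff, mem_ae_iff]
        have hset : {v : Fin m → ℝ | (0 : (Fin m → ℝ) → ℝ) v ≤ c₀ + l v}ᶜ
            = {v | c₀ + l v < 0} := by
          ext v; simp [not_le]
        rw [hset]
        refine hthick _ (measurableSet_lt (continuous_const.add l.continuous).measurable
          measurable_const) ?_
        intro v hv hvV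
        simp only [mem_setOf_eq] at hv
        linarith [hnn v hvV, hl v hvV]
      have h2 : ∫⁻ v, ENNReal.ofReal (c₀ + l v) ∂μ = ENNReal.ofReal (∫ v, (c₀ + l v) ∂μ) :=
        (ofReal_integral_eq_lintegral_ofReal hInt hnn2).symm
      have h3 : ∫ v, (c₀ + l v) ∂μ = c₀ + l vbar := by
        rw [integral_add (integrable_const _) (l.integrable_comp hIntId), integral_const,
          l.integral_comp_comm hIntId, hmean]
        simp [measure_univ]
      calc ∫⁻ v, h v ∂μ ≤ ENNReal.ofReal (∫ v, (c₀ + l v) ∂μ) := h2 ▸ h1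
        _ ≤ ENNReal.ofReal (f vbar + ε) := by
            rw [h3]; exact ENNReal.ofReal_le_ofReal hlv
        _ ≤ ENNReal.ofReal (f vbar) + ENNReal.ofReal ε := ENNReal.ofReal_add_le
        _ = ENNReal.ofReal (f vbar) + ε := by rw [ENNReal.ofReal_coe_nnreal]
    · exact absurd hr hB

/-- Under the standing assumptions with `G` a convex set-valued map, `𝒳, 𝒱` convex,
`B` concave and upper semicontinuous, `μ` of mean `v̄ ∈ 𝒱`, the `λ_k^B` integrable,
and the concave supermartingale condition `sup_{x⁺ ∈ G(x,v̄)} B(x⁺) ≤ B(x)` on `𝒳`: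
for all `0 ≤ j ≤ k` (written `k = j + r`), all `x ∈ 𝒳` and fixed `w₀,…,w_{j−1} ∈ 𝒱`,
`∫ λ_k^B(x, w₀,…,w_{j−1}, u_j,…,u_{k−1}) dμ^{⊗(k−j)} ≤ λ_j^B(x, w₀,…,w_{j−1})`;
i.e. `Z_k = λ_k^B(x, v₀,…,v_{k−1})` is a supermartingale. -/
theorem stmt12 {n m : ℕ} (X : Set (Fin n → ℝ)) (V : Set (Fin m → ℝ))
    (G : (Fin n → ℝ) → (Fin m → ℝ) → Set (Fin n → ℝ))
    (hG : Standing X V G)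
    (hXconv : Convex ℝ X) (hVconv : Convex ℝ V)
    (hgraph : Convex ℝ {p : ((Fin n → ℝ) × (Fin m → ℝ)) × (Fin n → ℝ) |
      p.1.1 ∈ X ∧ p.1.2 ∈ V ∧ p.2 ∈ G p.1.1 p.1.2})
    (hmap : ∀ x ∈ X, ∀ v ∈ V, G x v ⊆ X)
    (μ : Measure (Fin m → ℝ)) [IsProbabilityMeasure μ] (hμV : μ V = 1)
    (B : (Fin n → ℝ) → ℝ) (hBnn : ∀ y, 0 ≤ B y)
    (hBconc : ConcaveOn ℝ X B) (hBusc : UpperSemicontinuousOn B X)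
    (vbar : Fin m → ℝ) (hvbarV : vbar ∈ V)
    (hIntId : Integrable (fun v : Fin m → ℝ => v) μ)
    (hmean : ∫ v, v ∂μ = vbar)
    (hIntLam : ∀ (k : ℕ), ∀ x ∈ X,
      Integrable (fun v : Fin k → (Fin m → ℝ) => lam G B k x v)
        (Measure.pi fun _ : Fin k => μ))
    (hsup : ∀ x ∈ X, sSup (B '' G x vbar) ≤ B x) :
    ∀ (j r : ℕ), ∀ x ∈ X, ∀ w : Fin j → (Fin m → ℝ), (∀ i, w i ∈ V) →
      ∫⁻ u : Fin r → (Fin m → ℝ),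
          ENNReal.ofReal (lam G B (j + r) x (Fin.append w u))
          ∂(Measure.pi fun _ : Fin r => μ)
        ≤ ENNReal.ofReal (lam G B j x w) := by
  classical
  have husc := hG.usc
  have hloc := hG.locBdd
  have hclosed := hG.closedVals
  have hne := hG.nonemptyVals
  have hTex : ∀ x ∈ X, ∀ v ∈ V, ∃ T, IsCompact T ∧ T ⊆ X ∧ G x v ⊆ T := by
    intro x hx v hv
    obtain ⟨T, h1, h2, h3⟩ := union_G_compact husc hloc hclosed hmap
      isCompact_singleton (singleton_subset_iff.mpr hx) hv
    exact ⟨T, h1, h2, h3 x rfl⟩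
  have hbddAll := lam_bddAbove husc hloc hclosed hne hmap hBusc
  have hthick : ∀ S, MeasurableSet S → S ⊆ Vᶜ → μ S = 0 := by
    intro S hS hsub
    have h1 : μ V ≤ μ Sᶜ := measure_mono (subset_compl_comm.mp hsub)
    have h2 : μ Sᶜ = 1 := le_antisymm prob_le_one (hμV ▸ h1)
    have h3 : μ S + μ Sᶜ = 1 := by
      rw [measure_add_measure_compl hS]; exact measure_univ
    rw [h2] at h3
    have h4 : μ S + 1 ≤ 0 + 1 := by rw [h3, zero_add]
    exact le_antisymm ((ENNReal.add_le_add_iff_right ENNReal.one_ne_top).mp h4) zero_le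
  suffices H : ∀ (r j : ℕ), ∀ x ∈ X, ∀ w : Fin j → (Fin m → ℝ), (∀ i, w i ∈ V) →
      ∫⁻ u : Fin r → (Fin m → ℝ),
          ENNReal.ofReal (lam G B (j + r) x (Fin.append w u))
          ∂(Measure.pi fun _ : Fin r => μ)
        ≤ ENNReal.ofReal (lam G B j x w) by
    intro j r x hx w hw; exact H r j x hx w hw
  intro r
  induction r with
  | zero =>
    intro j x hx w hw
    have hconst : ∀ u : Fin 0 → (Fin m → ℝ),
        ENNReal.ofReal (lam G B (j + 0) x (Fin.append w u))
          = ENNReal.ofReal (lam G B j x w) := by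
      intro u
      refine congrArg ENNReal.ofReal ?_
      rw [Subsingleton.elim u Fin.elim0, Fin.append_elim0]
      exact lam_cast G B _ x _
    rw [lintegral_congr hconst, lintegral_const]
    simp
  | succ r IH =>
    intro j x hx w hw
    have key : ∀ (v0 : Fin m → ℝ) (u' : Fin r → (Fin m → ℝ)),
        lam G B (j + (r+1)) x (Fin.append w (Fin.cons v0 u'))
          = lam G B ((j+1) + r) x (Fin.append (Fin.snoc w v0) u') := by
      intro v0 u'
      rw [Fin.append_right_cons]
      exact lam_cast G B _ x _
    have hsnocmem : ∀ v0 : Fin m → ℝ, v0 ∈ V →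
        ∀ i : Fin (j+1), (Fin.snoc (α := fun _ => (Fin m → ℝ)) w v0) i ∈ V := by
      intro v0 hv0 i
      refine Fin.lastCases ?_ (fun i => ?_) i
      · rw [Fin.snoc_last]; exact hv0
      · rw [Fin.snoc_castSucc]; exact hw i
    set e := MeasurableEquiv.piFinSuccAbove (fun _ : Fin (r+1) => (Fin m → ℝ)) 0 with he
    have hmp := measurePreserving_piFinSuccAbove (fun _ : Fin (r+1) => μ) 0
    have hmap_eq : Measure.map e (Measure.pi fun _ : Fin (r+1) => μ)
        = μ.prod (Measure.pi fun _ : Fin r => μ) := hmp.map_eq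
    have h1 : ∫⁻ u, ENNReal.ofReal (lam G B (j + (r+1)) x (Fin.append w u))
          ∂(Measure.pi fun _ : Fin (r+1) => μ)
        = ∫⁻ p, ENNReal.ofReal (lam G B (j + (r+1)) x (Fin.append w (e.symm p)))
          ∂(μ.prod (Measure.pi fun _ : Fin r => μ)) := by
      rw [← hmap_eq, lintegral_map_equiv]
      simp
    have hsymm : ∀ (v0 : Fin m → ℝ) (u' : Fin r → (Fin m → ℝ)),
        e.symm (v0, u') = Fin.cons v0 u' := by
      intro v0 u'
      have h' : e.symm (v0, u') = Fin.insertNth 0 v0 u' := rfl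
      rw [h', Fin.insertNth_zero']
    have h2 := lintegral_prod_le' μ (Measure.pi fun _ : Fin r => μ)
      (fun p => ENNReal.ofReal (lam G B (j + (r+1)) x (Fin.append w (e.symm p))))
    have hconcf : ConcaveOn ℝ V (fun v0 => lam G B (j+1) x (Fin.snoc w v0)) := by
      refine ⟨hVconv, ?_⟩
      intro v1 hv1 v2 hv2 a b ha hb hab
      have hcon := lam_concave hXconv hVconv hgraph hne hmap hBconc hbddAll hTex (j+1)
        a b ha hb hab x hx x hx (Fin.snoc w v1) (Fin.snoc w v2)
        (hsnocmem v1 hv1) (hsnocmem v2 hv2)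
      have e1 : a • x + b • x = x := Convex.combo_self hab x
      have e2 : (fun i => a • Fin.snoc w v1 i + b • Fin.snoc w v2 i)
          = (Fin.snoc w (a • v1 + b • v2) : Fin (j+1) → (Fin m → ℝ)) := by
        funext i
        refine Fin.lastCases ?_ (fun i => ?_) i
        · rw [Fin.snoc_last, Fin.snoc_last, Fin.snoc_last]
        · rw [Fin.snoc_castSucc, Fin.snoc_castSucc, Fin.snoc_castSucc,
            ← add_smul, hab, one_smul]
      rw [e1, e2] at hcon
      simpa [smul_eq_mul] using hcon
    have hfnn : ∀ v ∈ V, 0 ≤ (fun v0 => lam G B (j+1) x (Fin.snoc w v0)) v :=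
      fun v _ => lam_nonneg G B hBnn _ _ _
    have hhle : ∀ v0 ∈ V,
        (fun v0 => ∫⁻ u', ENNReal.ofReal (lam G B (j + (r+1)) x
          (Fin.append w (e.symm (v0, u')))) ∂(Measure.pi fun _ : Fin r => μ)) v0
          ≤ ENNReal.ofReal ((fun v0 => lam G B (j+1) x (Fin.snoc w v0)) v0) := by
      intro v0 hv0
      have hIH := IH (j+1) x hx (Fin.snoc w v0) (hsnocmem v0 hv0)
      have heq : ∀ u' : Fin r → (Fin m → ℝ),
          ENNReal.ofReal (lam G B (j + (r+1)) x (Fin.append w (e.symm (v0, u'))))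
            = ENNReal.ofReal (lam G B ((j+1) + r) x (Fin.append (Fin.snoc w v0) u')) := by
        intro u'
        rw [hsymm, key]
      simpa only [lintegral_congr heq] using hIH
    have hjen := jensen_lintegral μ hIntId vbar hmean
      (Module.finrank ℝ (vectorSpan ℝ V)) V le_rfl hVconv hthick hvbarV
      (fun v0 => lam G B (j+1) x (Fin.snoc w v0)) hconcf hfnn
      (fun v0 => ∫⁻ u', ENNReal.ofReal (lam G B (j + (r+1)) x
        (Fin.append w (e.symm (v0, u')))) ∂(Measure.pi fun _ : Fin r => μ)) hhle
    refine le_trans (le_of_eq h1) (le_trans h2 (le_trans hjen ?_))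
    exact ENNReal.ofReal_le_ofReal
      (lam_snoc_vbar_le hne hmap hvbarV hsup hbddAll hTex j x hx w hw)
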